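/- Define polynomials h_i(q) by h_0(q) = 1 and, for i ≥ 1, (q − 1)·h_i(q) = q²·h_{i−1}(q) − q·C_{i−1}, where C_n = binom(2n, n)/(n+1) is the n-th Catalan number. Then for all i ≥ 1, h_i(q) = Σ_{k=1}^{i} (k/(2i−k))·binom(2i−k, i)·q^k. -/

import Mathlib

open Polynomial Finset

/-- The `n`-th Catalan number as a rational, `C n = binom(2n, n)/(n+1)`. -/
noncomputable def catalanQ (n : ℕ) : ℚ := ((2 * n).choose n : ℚ) / (n + 1)

noncomputable def ccAux (i k : ℕ) : ℚ :=
  (k : ℚ) / (2 * i - k) * ((2 * i - k).choose i : ℚ)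

noncomputable def PAux (m : ℕ) : Polynomial ℚ :=
  ∑ k ∈ Finset.Icc 1 m, C (ccAux m k) * X ^ k

lemma ccAux_self (m : ℕ) (hm : 1 ≤ m) : ccAux m m = 1 := by
  unfold ccAux
  have e : 2 * m - m = m := by omega
  have hq : (2 : ℚ) * m - m = (m : ℚ) := by ring
  rw [e, hq, Nat.choose_self, Nat.cast_one, mul_one, div_self]
  exact Nat.cast_ne_zero.mpr (by omega)

lemma ccAux_eq (m k : ℕ) (hk1 : 1 ≤ k) (hkm : k ≤ m) :
    ccAux m k = ((2 * m - k - 1).choose (m - 1) : ℚ) - ((2 * m - k - 1).choose m : ℚ) := by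
  obtain ⟨m, rfl⟩ : ∃ m', m = m' + 1 := ⟨m - 1, by omega⟩
  set n := 2 * (m + 1) - k with hn
  have hin : m + 1 ≤ n := by omega
  have hn1 : n - 1 + 1 = n := by omega
  have h1 : n * (n - 1).choose m = n.choose (m + 1) * (m + 1) := by
    have := Nat.add_one_mul_choose_eq (n - 1) m
    simp only [Nat.succ_eq_add_one, hn1] at this
    exact this
  have h2 : (n - 1).choose (m + 1) * n = n.choose (m + 1) * (n - (m + 1)) := by
    have := Nat.choose_mul_succ_eq (n - 1) (m + 1)
    rw [hn1] at this
    exact this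
  have hc : ((n - (m + 1) : ℕ) : ℚ) = (n : ℚ) - ((m : ℚ) + 1) := by
    push_cast [Nat.cast_sub hin]; ring
  have hq1 : (n : ℚ) * ((n - 1).choose m : ℚ) = (n.choose (m + 1) : ℚ) * ((m : ℚ) + 1) := by
    exact_mod_cast h1
  have hq2 : ((n - 1).choose (m + 1) : ℚ) * n = (n.choose (m + 1) : ℚ) * ((n : ℚ) - ((m : ℚ) + 1)) := by
    have h2q : (((n - 1).choose (m + 1) : ℕ) : ℚ) * (n : ℚ)
        = ((n.choose (m + 1) : ℕ) : ℚ) * ((n - (m + 1) : ℕ) : ℚ) := by exact_mod_cast h2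
    rw [hc] at h2q
    exact h2q
  have hk2 : (k : ℚ) = 2 * ((m : ℚ) + 1) - n := by
    have hnk : n + k = 2 * (m + 1) := by omega
    have := congrArg (fun t : ℕ => (t : ℚ)) hnk
    push_cast at this
    linarith
  have hqden : ((2 : ℚ) * ((m : ℚ) + 1) - k) = (n : ℚ) := by
    rw [hk2]; ring
  have hn0 : (n : ℚ) ≠ 0 := Nat.cast_ne_zero.mpr (by omega)
  have e1 : 2 * (m + 1) - k - 1 = n - 1 := by omega
  have e2 : m + 1 - 1 = m := by omega
  unfold ccAux
  rw [e1, e2]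
  push_cast
  rw [hqden]
  rw [div_mul_eq_mul_div, div_eq_iff hn0]
  linear_combination ((n.choose (m + 1) : ℚ)) * hk2 - hq1 + hq2

lemma sum_coeff (f : ℕ → ℚ) (m s n : ℕ) :
    (∑ k ∈ Finset.Icc 1 m, C (f k) * X ^ (k + s)).coeff n
      = if n ∈ Finset.Icc (1 + s) (m + s) then f (n - s) else 0 := by
  rw [finset_sum_coeff]
  simp only [coeff_C_mul, coeff_X_pow, mul_ite, mul_one, mul_zero]
  by_cases hmem : n ∈ Finset.Icc (1 + s) (m + s)
  · rw [if_pos hmem]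
    simp only [mem_Icc] at hmem
    rw [Finset.sum_eq_single (n - s)]
    · rw [if_pos (by omega)]
    · intro k hk hne
      simp only [mem_Icc] at hk
      rw [if_neg (by omega)]
    · intro hns
      simp only [mem_Icc] at hns
      omega
  · rw [if_neg hmem]
    apply Finset.sum_eq_zero
    intro k hk
    simp only [mem_Icc] at hk hmem
    rw [if_neg (by omega)]

lemma P_coeff (m n : ℕ) : (PAux m).coeff n = if n ∈ Finset.Icc 1 m then ccAux m n else 0 := by
  have e : PAux m = ∑ k ∈ Finset.Icc 1 m, C (ccAux m k) * X ^ (k + 0) := by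
    unfold PAux; simp
  rw [e, sum_coeff]
  norm_num

lemma XP_coeff (m n : ℕ) : (X * PAux m).coeff n
    = if n ∈ Finset.Icc 2 (m + 1) then ccAux m (n - 1) else 0 := by
  have e : X * PAux m = ∑ k ∈ Finset.Icc 1 m, C (ccAux m k) * X ^ (k + 1) := by
    unfold PAux; rw [Finset.mul_sum]; apply Finset.sum_congr rfl; intro k _; ring
  rw [e, sum_coeff]

lemma X2P_coeff (m n : ℕ) : (X ^ 2 * PAux m).coeff n
    = if n ∈ Finset.Icc 3 (m + 2) then ccAux m (n - 2) else 0 := by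
  have e : X ^ 2 * PAux m = ∑ k ∈ Finset.Icc 1 m, C (ccAux m k) * X ^ (k + 2) := by
    unfold PAux; rw [Finset.mul_sum]; apply Finset.sum_congr rfl; intro k _; ring
  rw [e, sum_coeff]

lemma I1 (i : ℕ) : ccAux (i + 2) 1 = catalanQ (i + 1) := by
  unfold ccAux catalanQ
  have e1 : 2 * (i + 2) - 1 = 2 * i + 3 := by omega
  have e2 : 2 * (i + 1) = 2 * i + 2 := by omega
  rw [e1, e2]
  have h := Nat.add_one_mul_choose_eq (2 * i + 2) (i + 1)
  have hq : ((2 * i + 3 : ℕ) : ℚ) * ((2 * i + 2).choose (i + 1) : ℚ)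
      = ((2 * i + 3).choose (i + 2) : ℚ) * ((i + 2 : ℕ) : ℚ) := by
    exact_mod_cast h
  push_cast at hq ⊢
  have d1 : ((2 : ℚ) * ((i : ℚ) + 2) - 1) = 2 * (i : ℚ) + 3 := by ring
  rw [d1]
  have hd1 : (2 * (i : ℚ) + 3) ≠ 0 := by positivity
  have hd2 : ((i : ℚ) + 1 + 1) ≠ 0 := by positivity
  rw [div_mul_eq_mul_div, one_mul, div_eq_div_iff hd1 hd2]
  linear_combination -hq

lemma I2 (i : ℕ) : ccAux (i + 2) 1 = ccAux (i + 2) 2 := by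
  rw [ccAux_eq (i + 2) 1 (by omega) (by omega), ccAux_eq (i + 2) 2 (by omega) (by omega)]
  have e1 : 2 * (i + 2) - 1 - 1 = 2 * i + 2 := by omega
  have e2 : 2 * (i + 2) - 2 - 1 = 2 * i + 1 := by omega
  have e3 : i + 2 - 1 = i + 1 := by omega
  rw [e1, e2, e3]
  have p1 : (2 * i + 2).choose (i + 1) = (2 * i + 1).choose i + (2 * i + 1).choose (i + 1) :=
    Nat.choose_succ_succ (2 * i + 1) i
  have p2 : (2 * i + 2).choose (i + 2) = (2 * i + 1).choose (i + 1) + (2 * i + 1).choose (i + 2) :=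
    Nat.choose_succ_succ (2 * i + 1) (i + 1)
  have sym : (2 * i + 1).choose i = (2 * i + 1).choose (i + 1) := by
    have h := Nat.choose_symm (show i + 1 ≤ 2 * i + 1 by omega)
    have e : 2 * i + 1 - (i + 1) = i := by omega
    rw [e] at h
    exact h
  rw [p1, p2, sym]
  push_cast
  ring

lemma I3 (i n : ℕ) (h3 : 3 ≤ n) (hn : n ≤ i + 2) :
    ccAux (i + 2) (n - 1) - ccAux (i + 2) n = ccAux (i + 1) (n - 2) := by
  rw [ccAux_eq (i + 2) (n - 1) (by omega) (by omega)]
  rw [ccAux_eq (i + 2) n (by omega) (by omega)]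
  rw [ccAux_eq (i + 1) (n - 2) (by omega) (by omega)]
  obtain ⟨s, hs⟩ : ∃ s, n + s = 2 * i + 2 := ⟨2 * i + 2 - n, by omega⟩
  have e0 : i + 2 - 1 = i + 1 := by omega
  have e0' : i + 1 - 1 = i := by omega
  have e1 : 2 * (i + 2) - (n - 1) - 1 = s + 2 := by omega
  have e2 : 2 * (i + 2) - n - 1 = s + 1 := by omega
  have e3 : 2 * (i + 1) - (n - 2) - 1 = s + 1 := by omega
  rw [e0, e0', e1, e2, e3]
  have p1 : (s + 2).choose (i + 1) = (s + 1).choose i + (s + 1).choose (i + 1) :=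
    Nat.choose_succ_succ (s + 1) i
  have p2 : (s + 2).choose (i + 2) = (s + 1).choose (i + 1) + (s + 1).choose (i + 2) :=
    Nat.choose_succ_succ (s + 1) (i + 1)
  rw [p1, p2]
  push_cast
  ring

lemma key (i : ℕ) :
    (X - 1) * PAux (i + 2) = X ^ 2 * PAux (i + 1) - C (catalanQ (i + 1)) * X := by
  ext n
  rw [sub_mul, one_mul]
  simp only [coeff_sub, XP_coeff, P_coeff, X2P_coeff, coeff_C_mul, coeff_X,
    mul_ite, mul_one, mul_zero, mem_Icc]
  rcases (show n = 0 ∨ n = 1 ∨ n = 2 ∨ (3 ≤ n ∧ n ≤ i + 2) ∨ n = i + 3 ∨ i + 3 < n by omega)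
    with h | h | h | ⟨h, h'⟩ | h | h
  · subst h
    split_ifs with a b c d <;> first | (exfalso; first | omega | assumption) | norm_num
  · subst h
    split_ifs with a b c d <;> first | (exfalso; first | omega | assumption) | skip
    rw [I1]
  · subst h
    split_ifs with a b c d <;> first | (exfalso; first | omega | assumption) | skip
    norm_num
    linarith [I2 i]
  · split_ifs with a b c d <;> first | (exfalso; first | omega | assumption) | skip
    rw [sub_zero]
    exact I3 i n h h'
  · subst h
    split_ifs with a b c d <;> first | (exfalso; first | omega | assumption) | skip
    have e1 : i + 3 - 1 = i + 2 := by omega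
    have e2 : i + 3 - 2 = i + 1 := by omega
    rw [e1, e2, ccAux_self _ (by omega), ccAux_self _ (by omega)]
  · split_ifs with a b c d <;> first | (exfalso; first | omega | assumption) | norm_num

theorem stmt_10 (h : ℕ → Polynomial ℚ) (h0 : h 0 = 1)
    (hrec : ∀ i : ℕ, (X - 1) * h (i + 1) = X ^ 2 * h i - C (catalanQ i) * X) :
    ∀ i : ℕ, 1 ≤ i →
      h i = ∑ k ∈ Finset.Icc 1 i,
        C ((k : ℚ) / (2 * i - k) * ((2 * i - k).choose i : ℚ)) * X ^ k := by
  have hX : (X - 1 : Polynomial ℚ) ≠ 0 := by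
    intro hc
    have h1 := congrArg (fun p : Polynomial ℚ => p.coeff 1) hc
    simp [Polynomial.coeff_one] at h1
  have hP : ∀ j : ℕ, h (j + 1) = PAux (j + 1) := by
    intro j
    induction j with
    | zero =>
      apply mul_left_cancel₀ hX
      rw [hrec 0, h0]
      have hc0 : catalanQ 0 = 1 := by simp [catalanQ]
      have hP1 : PAux 1 = X := by
        unfold PAux
        rw [Finset.Icc_self, Finset.sum_singleton, ccAux_self 1 le_rfl, map_one, one_mul, pow_one]
      rw [hP1, hc0, map_one]
      ring
    | succ j ih =>
      apply mul_left_cancel₀ hX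
      rw [hrec (j + 1), ih, key j]
  intro i hi
  obtain ⟨j, rfl⟩ : ∃ j, i = j + 1 := ⟨i - 1, by omega⟩
  rw [hP j]
  unfold PAux ccAux
  rfl
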